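/- For any template Γ and any 1 ≤ j ≤ l(Γ), the quantity κ_j(Γ), defined as the sum of weights of edges i→k with i < j ≤ k, satisfies κ_j(Γ) ≤ 2·δ(Γ). -/

import Mathlib

/-- A template: a directed graph on vertices `{0, ..., l}` (`l ≥ 1`), possibly with
multiple edges, recorded as a multiset of triples `(i, j, w)` meaning an edge `i → j`
of weight `w`, such that `i < j`, `j ≤ l`, `w > 0`, every edge between consecutive
vertices has weight at least 2, and every intermediate vertex is covered by an edge. -/
structure Template where
  l : ℕ
  edges : Multiset (ℕ × ℕ × ℕ)
  one_le_l : 1 ≤ l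
  lt_of_mem : ∀ e ∈ edges, e.1 < e.2.1
  le_l : ∀ e ∈ edges, e.2.1 ≤ l
  w_pos : ∀ e ∈ edges, 0 < e.2.2
  short_two : ∀ e ∈ edges, e.2.1 = e.1 + 1 → 2 ≤ e.2.2
  covered : ∀ j, 1 ≤ j → j + 1 ≤ l → ∃ e ∈ edges, e.1 < j ∧ j < e.2.1

/-- The cogenus `δ(Γ) = ∑_{edges i→j} ((j−i)·w(e) − 1)`. -/
def Template.cogenus (Γ : Template) : ℕ :=
  (Γ.edges.map (fun e => (e.2.1 - e.1) * e.2.2 - 1)).sum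

/-- `κ_j(Γ)`: the sum of the weights of edges `i → k` with `i < j ≤ k`. -/
def Template.kappa (Γ : Template) (j : ℕ) : ℕ :=
  ((Γ.edges.filter (fun e => e.1 < j ∧ j ≤ e.2.1)).map (fun e => e.2.2)).sum

/-- The multiplicity `μ(Γ) = ∏_e w(e)²`. -/
def Template.mult (Γ : Template) : ℕ :=
  (Γ.edges.map (fun e => e.2.2 ^ 2)).prod

/-- For any template `Γ` and any `1 ≤ j ≤ l(Γ)`, we have `κ_j(Γ) ≤ 2·δ(Γ)`. -/
theorem kappa_le_two_mul_cogenus (Γ : Template) (j : ℕ) (hj1 : 1 ≤ j) (hj2 : j ≤ Γ.l) :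
    Γ.kappa j ≤ 2 * Γ.cogenus := by
  have key : ∀ e ∈ Γ.edges.filter (fun e => e.1 < j ∧ j ≤ e.2.1),
      (fun e : ℕ × ℕ × ℕ => e.2.2) e ≤
      (fun e : ℕ × ℕ × ℕ => 2 * ((e.2.1 - e.1) * e.2.2 - 1)) e := by
    intro e he
    have he' : e ∈ Γ.edges := Multiset.mem_of_mem_filter he
    have hlt := Γ.lt_of_mem e he'
    have hw := Γ.w_pos e he'
    have hshort := Γ.short_two e he'
    simp only
    rcases eq_or_lt_of_le (Nat.succ_le_of_lt hw) with h1 | h2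
    · -- w = 1
      have hk : e.2.1 ≠ e.1 + 1 := by
        intro h; have := hshort h; omega
      have hd : 2 ≤ e.2.1 - e.1 := by omega
      have hw1 : e.2.2 = 1 := by omega
      have : (e.2.1 - e.1) * e.2.2 = e.2.1 - e.1 := by rw [hw1, mul_one]
      omega
    · -- w ≥ 2
      have hd : 1 ≤ e.2.1 - e.1 := by omega
      have := Nat.le_mul_of_pos_left e.2.2 hd
      omega
  calc Γ.kappa j
      ≤ ((Γ.edges.filter (fun e => e.1 < j ∧ j ≤ e.2.1)).map
          (fun e => 2 * ((e.2.1 - e.1) * e.2.2 - 1))).sum :=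
        Multiset.sum_map_le_sum_map _ _ key
    _ ≤ (Γ.edges.map (fun e => 2 * ((e.2.1 - e.1) * e.2.2 - 1))).sum :=
        by
        obtain ⟨u, hu⟩ := Multiset.le_iff_exists_add.mp
          (Multiset.map_le_map (f := fun e : ℕ × ℕ × ℕ => 2 * ((e.2.1 - e.1) * e.2.2 - 1))
            (Multiset.filter_le (fun e => e.1 < j ∧ j ≤ e.2.1) Γ.edges))
        rw [hu, Multiset.sum_add]
        exact Nat.le_add_right _ _
    _ = 2 * Γ.cogenus := by
        rw [Template.cogenus, ← Multiset.sum_map_mul_left]
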